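/- If there exists a set of f mutually quasi-unbiased Hadamard matrices of order n with parameters ((n/2α)², 4α²) and 3n − 4α² − 2 > 0, then f ≤ ⌊(n² − 4α²)/(3n − 4α² − 2)⌋. -/

import Mathlib

open Matrix

/-- A Hadamard matrix: all entries are `±1` and `H * Hᵀ = n • 1`. -/
def IsHadamardMatrix {m : Type*} [Fintype m] [DecidableEq m] (H : Matrix m m ℝ) : Prop :=
  (∀ i j, H i j = 1 ∨ H i j = -1) ∧ H * Hᵀ = (Fintype.card m : ℝ) • 1

/-- A weighing matrix of weight `l`: entries in `{0, 1, -1}` and `W * Wᵀ = l • 1`. -/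
def IsWeighingMatrix {m : Type*} [Fintype m] [DecidableEq m] (W : Matrix m m ℝ) (l : ℕ) : Prop :=
  (∀ i j, W i j = 0 ∨ W i j = 1 ∨ W i j = -1) ∧ W * Wᵀ = (l : ℝ) • 1

/-- `H` and `K` are quasi-unbiased Hadamard matrices with parameters `(l, a)`. -/
def QuasiUnbiased {m : Type*} [Fintype m] [DecidableEq m] (H K : Matrix m m ℝ) (l a : ℕ) : Prop :=
  IsHadamardMatrix H ∧ IsHadamardMatrix K ∧
    IsWeighingMatrix ((Real.sqrt (a : ℝ))⁻¹ • (H * Kᵀ)) l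

namespace Stmt13Aux

open Finset

lemma key_nonneg {X β : Type*} [Fintype X] (s : Finset β) (g : β → X → ℝ) :
    0 ≤ ∑ x : X, ∑ y : X, ∑ t ∈ s, g t x * g t y := by
  have h1 : ∑ x : X, ∑ y : X, ∑ t ∈ s, g t x * g t y
      = ∑ t ∈ s, (∑ x : X, g t x) * (∑ y : X, g t y) := by
    calc ∑ x : X, ∑ y : X, ∑ t ∈ s, g t x * g t y
        = ∑ x : X, ∑ t ∈ s, ∑ y : X, g t x * g t y := by
          exact Finset.sum_congr rfl fun x _ => Finset.sum_comm
      _ = ∑ t ∈ s, ∑ x : X, ∑ y : X, g t x * g t y := Finset.sum_comm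
      _ = ∑ t ∈ s, (∑ x : X, g t x) * (∑ y : X, g t y) := by
          exact Finset.sum_congr rfl fun t _ => (Finset.sum_mul_sum _ _ _ _).symm
  rw [h1]
  exact Finset.sum_nonneg fun t _ => mul_self_nonneg _

lemma glob2 {n : ℕ} {X : Type*} [Fintype X] (v : X → Fin n → ℝ) :
    0 ≤ ∑ x : X, ∑ y : X, ∑ a, ∑ b ∈ univ.erase a,
      (v x a * v y a) * (v x b * v y b) := by
  have key := key_nonneg ((univ : Finset (Fin n)).sigma fun a => univ.erase a)
    (fun t x => v x t.1 * v x t.2)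
  have conv : ∀ x y : X, ∑ a, ∑ b ∈ univ.erase a, (v x a * v y a) * (v x b * v y b)
      = ∑ t ∈ (univ : Finset (Fin n)).sigma (fun a => univ.erase a),
          (v x t.1 * v x t.2) * (v y t.1 * v y t.2) := by
    intro x y
    rw [Finset.sum_sigma]
    exact Finset.sum_congr rfl fun a _ => Finset.sum_congr rfl fun b _ => by ring
  calc (0:ℝ) ≤ _ := key
    _ = _ := by
      exact Finset.sum_congr rfl fun x _ => Finset.sum_congr rfl fun y _ => (conv x y).symm

lemma glob4 {n : ℕ} {X : Type*} [Fintype X] (v : X → Fin n → ℝ) :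
    0 ≤ ∑ x : X, ∑ y : X, ∑ a, ∑ b ∈ univ.erase a, ∑ c ∈ (univ.erase a).erase b,
      ∑ d ∈ ((univ.erase a).erase b).erase c,
      (v x a * v y a) * (v x b * v y b) * (v x c * v y c) * (v x d * v y d) := by
  set s2 := (univ : Finset (Fin n)).sigma (fun a => univ.erase a) with hs2
  set s3 := s2.sigma (fun p => (univ.erase p.1).erase p.2) with hs3
  set s4 := s3.sigma (fun q => ((univ.erase q.1.1).erase q.1.2).erase q.2) with hs4
  have key := key_nonneg s4
    (fun t x => v x t.1.1.1 * v x t.1.1.2 * v x t.1.2 * v x t.2)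
  have conv : ∀ x y : X,
      ∑ a, ∑ b ∈ univ.erase a, ∑ c ∈ (univ.erase a).erase b,
        ∑ d ∈ ((univ.erase a).erase b).erase c,
        (v x a * v y a) * (v x b * v y b) * (v x c * v y c) * (v x d * v y d)
      = ∑ t ∈ s4, (v x t.1.1.1 * v x t.1.1.2 * v x t.1.2 * v x t.2)
          * (v y t.1.1.1 * v y t.1.1.2 * v y t.1.2 * v y t.2) := by
    intro x y
    rw [hs4, Finset.sum_sigma, hs3, Finset.sum_sigma, hs2, Finset.sum_sigma]
    refine Finset.sum_congr rfl fun a _ => Finset.sum_congr rfl fun b _ => ?_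
    refine Finset.sum_congr rfl fun c _ => Finset.sum_congr rfl fun d _ => by ring
  calc (0:ℝ) ≤ _ := key
    _ = _ := by
      exact Finset.sum_congr rfl fun x _ => Finset.sum_congr rfl fun y _ => (conv x y).symm

variable {n : ℕ}

lemma erase1_sum (z : Fin n → ℝ) (a : Fin n) :
    ∑ b ∈ univ.erase a, z b = (∑ b, z b) - z a :=
  Finset.sum_erase_eq_sub (mem_univ a)

lemma erase2_sum (z : Fin n → ℝ) {a b : Fin n} (hb : b ∈ univ.erase a) :
    ∑ c ∈ (univ.erase a).erase b, z c = (∑ c, z c) - z a - z b := by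
  rw [Finset.sum_erase_eq_sub hb, erase1_sum]

lemma erase3_sum (z : Fin n → ℝ) {a b c : Fin n} (hb : b ∈ univ.erase a)
    (hc : c ∈ (univ.erase a).erase b) :
    ∑ d ∈ ((univ.erase a).erase b).erase c, z d = (∑ d, z d) - z a - z b - z c := by
  rw [Finset.sum_erase_eq_sub hc, erase2_sum z hb]

lemma sq_sum_one {z : Fin n → ℝ} (hz : ∀ a, z a = 1 ∨ z a = -1) (a : Fin n) :
    z a * z a = 1 := by rcases hz a with h | h <;> rw [h] <;> norm_num

lemma cube_self {z : Fin n → ℝ} (hz : ∀ a, z a = 1 ∨ z a = -1) (a : Fin n) :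
    z a * z a * z a = z a := by rcases hz a with h | h <;> rw [h] <;> norm_num

lemma ident2 {z : Fin n → ℝ} (hz : ∀ a, z a = 1 ∨ z a = -1) :
    ∑ a, ∑ b ∈ univ.erase a, z a * z b = (∑ a, z a) ^ 2 - n := by
  have h : ∀ a : Fin n, ∑ b ∈ univ.erase a, z a * z b = z a * ((∑ b, z b) - z a) := by
    intro a; rw [← Finset.mul_sum, erase1_sum]
  rw [Finset.sum_congr rfl fun a _ => h a]
  have : ∑ a, z a * ((∑ b, z b) - z a) = (∑ a, z a * (∑ b, z b)) - ∑ a, z a * z a := by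
    rw [← Finset.sum_sub_distrib]; exact Finset.sum_congr rfl fun a _ => by ring
  rw [this]
  simp only [sq_sum_one hz]
  rw [← Finset.sum_mul]
  simp [Finset.card_univ]
  ring

lemma ident4 (hn : 3 ≤ n) {z : Fin n → ℝ} (hz : ∀ a, z a = 1 ∨ z a = -1) :
    ∑ a, ∑ b ∈ univ.erase a, ∑ c ∈ (univ.erase a).erase b,
      ∑ d ∈ ((univ.erase a).erase b).erase c, z a * z b * z c * z d
    = (∑ a, z a) ^ 4 - (6 * n - 8) * (∑ a, z a) ^ 2 + 3 * (n : ℝ) ^ 2 - 6 * n := by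
  set m : ℝ := ∑ a, z a with hm
  have hn1 : ((n : ℝ) - 1) ≥ 0 := by
    have : (3:ℝ) ≤ n := by exact_mod_cast hn
    linarith
  have e1a : ∀ a : Fin n, ∑ b ∈ univ.erase a, z b = m - z a := fun a => erase1_sum z a
  have e1b : ∀ a : Fin n, ∑ b ∈ univ.erase a, z b * z b = (n : ℝ) - 1 := by
    intro a
    rw [Finset.sum_congr rfl fun b _ => sq_sum_one hz b]
    rw [Finset.sum_const, Finset.card_erase_of_mem (mem_univ a), Finset.card_univ,
      Fintype.card_fin]
    have h1 : (1:ℕ) ≤ n := by omega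
    rw [nsmul_eq_mul, mul_one, Nat.cast_sub h1, Nat.cast_one]
  have e1c : ∀ a : Fin n, ∑ b ∈ univ.erase a, z b * z b * z b = m - z a := by
    intro a
    rw [Finset.sum_congr rfl fun b _ => cube_self hz b]
    exact e1a a
  have e2a : ∀ {a b : Fin n}, b ∈ univ.erase a →
      ∑ c ∈ (univ.erase a).erase b, z c = m - z a - z b := fun hb => erase2_sum z hb
  have e2b : ∀ {a b : Fin n}, b ∈ univ.erase a →
      ∑ c ∈ (univ.erase a).erase b, z c * z c = (n : ℝ) - 2 := by
    intro a b hb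
    rw [Finset.sum_congr rfl fun c _ => sq_sum_one hz c]
    rw [Finset.sum_const, Finset.card_erase_of_mem hb,
      Finset.card_erase_of_mem (mem_univ a), Finset.card_univ, Fintype.card_fin]
    have h2 : (2:ℕ) ≤ n := by omega
    rw [show n - 1 - 1 = n - 2 by omega, nsmul_eq_mul, mul_one, Nat.cast_sub h2]
    norm_num
  have stepD : ∀ (a : Fin n), ∀ b ∈ univ.erase a, ∀ c ∈ (univ.erase a).erase b,
      ∑ d ∈ ((univ.erase a).erase b).erase c, z a * z b * z c * z d
        = z a * z b * z c * (m - z a - z b - z c) := by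
    intro a b hb c hc
    rw [← Finset.mul_sum, erase3_sum z hb hc]
  have stepC : ∀ (a : Fin n), ∀ b ∈ univ.erase a,
      ∑ c ∈ (univ.erase a).erase b, z a * z b * z c * (m - z a - z b - z c)
        = z a * z b * ((m - z a - z b) * (m - z a - z b) - ((n : ℝ) - 2)) := by
    intro a b hb
    have : ∀ c : Fin n, z a * z b * z c * (m - z a - z b - z c)
        = (z a * z b * (m - z a - z b)) * z c - (z a * z b) * (z c * z c) := by
      intro c; ring
    rw [Finset.sum_congr rfl fun c _ => this c, Finset.sum_sub_distrib,
      ← Finset.mul_sum, ← Finset.mul_sum, e2a hb, e2b hb]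
    ring
  have stepB : ∀ a : Fin n,
      ∑ b ∈ univ.erase a, z a * z b * ((m - z a - z b) * (m - z a - z b) - ((n : ℝ) - 2))
        = z a * ((m - z a) * (m - z a) * (m - z a) - (3 * n - 5) * (m - z a)) := by
    intro a
    have : ∀ b : Fin n, z a * z b * ((m - z a - z b) * (m - z a - z b) - ((n : ℝ) - 2))
        = (z a * ((m - z a) * (m - z a) - ((n:ℝ) - 2))) * z b
          - (2 * z a * (m - z a)) * (z b * z b) + z a * (z b * z b * z b) := by
      intro b; ring
    rw [Finset.sum_congr rfl fun b _ => this b, Finset.sum_add_distrib,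
      Finset.sum_sub_distrib, ← Finset.mul_sum, ← Finset.mul_sum, ← Finset.mul_sum,
      e1a, e1b, e1c]
    ring
  have stepA :
      ∑ a, z a * ((m - z a) * (m - z a) * (m - z a) - (3 * n - 5) * (m - z a))
        = m ^ 4 - (6 * n - 8) * m ^ 2 + 3 * (n : ℝ) ^ 2 - 6 * n := by
    have hpt : ∀ a : Fin n, z a * ((m - z a) * (m - z a) * (m - z a) - (3 * n - 5) * (m - z a))
        = (m * m * m - (3 * (n:ℝ) - 5) * m) * z a
          + (-3 * m * m + (3 * n - 5)) * (z a * z a) + (3 * m) * (z a * z a * z a)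
          - (z a * z a) * (z a * z a) := by
      intro a; ring
    rw [Finset.sum_congr rfl fun a _ => hpt a]
    have hz2 : ∀ a : Fin n, z a * z a = 1 := sq_sum_one hz
    have hz3 : ∀ a : Fin n, z a * z a * z a = z a := cube_self hz
    simp only [hz2, hz3, one_mul, mul_one]
    rw [Finset.sum_sub_distrib, Finset.sum_add_distrib, Finset.sum_add_distrib,
      ← Finset.mul_sum, ← Finset.mul_sum, ← hm]
    simp [Finset.card_univ]
    ring
  calc ∑ a, ∑ b ∈ univ.erase a, ∑ c ∈ (univ.erase a).erase b,
      ∑ d ∈ ((univ.erase a).erase b).erase c, z a * z b * z c * z d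
      = ∑ a, z a * ((m - z a) * (m - z a) * (m - z a) - (3 * n - 5) * (m - z a)) := by
        refine Finset.sum_congr rfl fun a _ => ?_
        rw [Finset.sum_congr rfl fun b hb => ?_]
        · exact stepB a
        · rw [Finset.sum_congr rfl fun c hc => stepD a b hb c hc]
          exact stepC a b hb
    _ = _ := stepA

end Stmt13Aux

open Stmt13Aux Finset in
theorem stmt_13 (n f α : ℕ) (hα : 0 < α) (hdvd : 2 * α ∣ n)
    (h : ∃ H : Fin f → Matrix (Fin n) (Fin n) ℝ,
      (∀ i, IsHadamardMatrix (H i)) ∧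
      ∀ i j, i ≠ j → QuasiUnbiased (H i) (H j) ((n / (2 * α)) ^ 2) (4 * α ^ 2))
    (hpos : (0 : ℤ) < 3 * (n : ℤ) - 4 * (α : ℤ) ^ 2 - 2) :
    (f : ℤ) * (3 * (n : ℤ) - 4 * (α : ℤ) ^ 2 - 2) ≤
      (n : ℤ) ^ 2 - 4 * (α : ℤ) ^ 2 := by
  obtain ⟨H, hHad, hQU⟩ := h
  have hα1 : (1 : ℤ) ≤ (α : ℤ) := by exact_mod_cast hα
  have hn3 : 3 ≤ n := by
    have : (3 : ℤ) ≤ (n : ℤ) := by nlinarith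
    exact_mod_cast this
  rcases Nat.eq_zero_or_pos f with hf | hf
  · subst hf
    simp only [Nat.cast_zero, zero_mul]
    have h3 : (3 : ℤ) ≤ (n : ℤ) := by exact_mod_cast hn3
    nlinarith
  -- main case
  set X := Fin f × Fin n with hX
  set v : X → Fin n → ℝ := fun x a => H x.1 x.2 a with hv
  set M : X → X → ℝ := fun x y => ∑ a, v x a * v y a with hM
  have hpm : ∀ (x : X) a, v x a = 1 ∨ v x a = -1 := fun x a => (hHad x.1).1 x.2 a
  have hz : ∀ (x y : X) a, v x a * v y a = 1 ∨ v x a * v y a = -1 := by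
    intro x y a
    rcases hpm x a with h1 | h1 <;> rcases hpm y a with h2 | h2 <;>
      rw [h1, h2] <;> norm_num
  have hMdiag : ∀ x : X, M x x = n := by
    intro x
    show ∑ a, v x a * v x a = (n : ℝ)
    rw [Finset.sum_congr rfl fun a _ => sq_sum_one (hpm x) a]
    simp
  have hMoff : ∀ x y : X, x ≠ y →
      M x y = 0 ∨ M x y = 2 * (α : ℝ) ∨ M x y = -(2 * (α : ℝ)) := by
    intro x y hxy
    show (∑ a, v x a * v y a) = 0 ∨ _ ∨ _
    by_cases hij : x.1 = y.1
    · left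
      have hrow : x.2 ≠ y.2 := by
        intro h2; exact hxy (Prod.ext hij h2)
      have hmat := congrArg (fun A => A x.2 y.2) (hHad y.1).2
      simp only [Matrix.mul_apply, Matrix.transpose_apply, Matrix.smul_apply,
        Matrix.one_apply, if_neg hrow, smul_zero] at hmat
      rw [← hij] at hmat
      simpa [hv, hij] using hmat
    · have hq := (hQU x.1 y.1 hij).2.2.1 x.2 y.2
      have hsqrt : Real.sqrt ((4 * α ^ 2 : ℕ) : ℝ) = 2 * (α : ℝ) := by
        rw [show ((4 * α ^ 2 : ℕ) : ℝ) = (2 * (α : ℝ)) ^ 2 by push_cast; ring]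
        exact Real.sqrt_sq (by positivity)
      have hα0 : (2 * (α : ℝ)) ≠ 0 := by positivity
      simp only [Matrix.smul_apply, Matrix.mul_apply, Matrix.transpose_apply, hsqrt,
        smul_eq_mul] at hq
      rcases hq with h1 | h1 | h1
      · left; field_simp at h1; rw [mul_zero] at h1; exact h1
      · right; left; field_simp at h1; linarith
      · right; right; field_simp at h1; linarith
  -- the two positive semidefiniteness inequalities
  have key2 : 0 ≤ ∑ x : X, ∑ y : X, ((M x y) ^ 2 - (n : ℝ)) := by
    calc (0:ℝ) ≤ ∑ x : X, ∑ y : X, ∑ a, ∑ b ∈ univ.erase a,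
        (v x a * v y a) * (v x b * v y b) := glob2 v
      _ = _ := by
        refine Finset.sum_congr rfl fun x _ => Finset.sum_congr rfl fun y _ => ?_
        exact ident2 (hz x y)
  have key4 : 0 ≤ ∑ x : X, ∑ y : X,
      ((M x y) ^ 4 - (6 * n - 8) * (M x y) ^ 2 + 3 * (n:ℝ) ^ 2 - 6 * n) := by
    calc (0:ℝ) ≤ ∑ x : X, ∑ y : X, ∑ a, ∑ b ∈ univ.erase a, ∑ c ∈ (univ.erase a).erase b,
        ∑ d ∈ ((univ.erase a).erase b).erase c,
        (v x a * v y a) * (v x b * v y b) * (v x c * v y c) * (v x d * v y d) := glob4 v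
      _ = _ := by
        refine Finset.sum_congr rfl fun x _ => Finset.sum_congr rfl fun y _ => ?_
        exact ident4 hn3 (hz x y)
  -- exact value of the diagonal sum
  have valdiag : ∑ x : X, ∑ y : X,
      ((M x y) ^ 4 - (2 * (α:ℝ)) ^ 2 * (M x y) ^ 2)
      = ((f : ℝ) * (n : ℝ)) * ((n:ℝ) ^ 4 - (2 * (α:ℝ)) ^ 2 * (n:ℝ) ^ 2) := by
    have hrow : ∀ x : X, ∑ y : X, ((M x y) ^ 4 - (2 * (α:ℝ)) ^ 2 * (M x y) ^ 2)
        = (n:ℝ) ^ 4 - (2 * (α:ℝ)) ^ 2 * (n:ℝ) ^ 2 := by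
      intro x
      rw [Finset.sum_eq_single_of_mem x (mem_univ x)]
      · rw [hMdiag x]
      · intro y _ hyx
        rcases hMoff x y (Ne.symm hyx) with h1 | h1 | h1 <;> rw [h1] <;> ring
    rw [Finset.sum_congr rfl fun x _ => hrow x]
    rw [Finset.sum_const, Finset.card_univ]
    simp only [hX, Fintype.card_prod, Fintype.card_fin, nsmul_eq_mul]
    push_cast
    ring
  -- combine
  have expand : ∑ x : X, ∑ y : X, ((M x y) ^ 4 - (2 * (α:ℝ)) ^ 2 * (M x y) ^ 2)
      = (∑ x : X, ∑ y : X,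
          ((M x y) ^ 4 - (6 * n - 8) * (M x y) ^ 2 + 3 * (n:ℝ) ^ 2 - 6 * n))
        + (6 * (n:ℝ) - 8 - (2 * (α:ℝ)) ^ 2) * (∑ x : X, ∑ y : X, ((M x y) ^ 2 - (n:ℝ)))
        + ((n:ℝ) * (3 * (n:ℝ) - 2 - (2 * (α:ℝ)) ^ 2)) * ((f : ℝ) * (n : ℝ)) ^ 2 := by
    have pt : ∀ x y : X, (M x y) ^ 4 - (2 * (α:ℝ)) ^ 2 * (M x y) ^ 2
        = ((M x y) ^ 4 - (6 * n - 8) * (M x y) ^ 2 + 3 * (n:ℝ) ^ 2 - 6 * n)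
          + (6 * (n:ℝ) - 8 - (2 * (α:ℝ)) ^ 2) * ((M x y) ^ 2 - (n:ℝ))
          + ((n:ℝ) * (3 * (n:ℝ) - 2 - (2 * (α:ℝ)) ^ 2)) := by
      intro x y; ring
    rw [Finset.sum_congr rfl fun x _ =>
      Finset.sum_congr rfl fun y _ => pt x y]
    simp only [Finset.sum_add_distrib, ← Finset.mul_sum, Finset.sum_const,
      Finset.card_univ, nsmul_eq_mul]
    simp [hX]
    ring
  have hrZ : 4 * (α:ℤ) ^ 2 + 2 < 3 * (n:ℤ) := by linarith
  have hr : (4:ℝ) * (α:ℝ) ^ 2 + 2 < 3 * (n:ℝ) := by exact_mod_cast hrZ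
  have hn3r : (3:ℝ) ≤ (n:ℝ) := by exact_mod_cast hn3
  have hC2 : 0 ≤ 6 * (n:ℝ) - 8 - (2 * (α:ℝ)) ^ 2 := by nlinarith
  have hineq : ((n:ℝ) * (3 * (n:ℝ) - 2 - (2 * (α:ℝ)) ^ 2)) * ((f : ℝ) * (n : ℝ)) ^ 2
      ≤ ((f : ℝ) * (n : ℝ)) * ((n:ℝ) ^ 4 - (2 * (α:ℝ)) ^ 2 * (n:ℝ) ^ 2) := by
    rw [← valdiag, expand]
    nlinarith [mul_nonneg hC2 key2, key4]
  -- final arithmetic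
  have hfpos : (0:ℝ) < (f:ℝ) := by exact_mod_cast hf
  have hnpos : (0:ℝ) < (n:ℝ) := by
    have : 0 < n := by omega
    exact_mod_cast this
  have hfinal : (f:ℝ) * (3 * (n:ℝ) - 4 * (α:ℝ) ^ 2 - 2) ≤ (n:ℝ) ^ 2 - 4 * (α:ℝ) ^ 2 := by
    have hA : (0:ℝ) < (f:ℝ) * (n:ℝ) ^ 3 := by positivity
    have h2 : ((f:ℝ) * (n:ℝ) ^ 3) * ((f:ℝ) * (3 * (n:ℝ) - 4 * (α:ℝ) ^ 2 - 2))
        ≤ ((f:ℝ) * (n:ℝ) ^ 3) * ((n:ℝ) ^ 2 - 4 * (α:ℝ) ^ 2) := by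
      nlinarith [hineq]
    exact le_of_mul_le_mul_left h2 hA
  have : ((f * (3 * (n : ℤ) - 4 * (α : ℤ) ^ 2 - 2) : ℤ) : ℝ)
      ≤ (((n : ℤ) ^ 2 - 4 * (α : ℤ) ^ 2 : ℤ) : ℝ) := by
    push_cast
    linarith
  exact_mod_cast this
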